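/- Let k ⊆ K be fields of characteristic zero and m ≥ 2 an integer. Let a, b ∈ K[[t]] be formal power series with invertible constant terms a(0), b(0) ∈ K^×; let s ∈ K[[t]] satisfy s(0) = 0 and s'(0) ∈ K^× (a change of local parameter, so that s is invertible of order 1 in K((t))); and let u ∈ K((t)) be nonzero (a change of local frame). Suppose that a·t^{−m} = (b∘s)·s^{−m}·s' + u'/u holds in K((t)), i.e., the rank-one connection forms a·dt/t^m and b·dt'/t'^m correspond under the substitution t' = s(t) and the frame change by u. Then m·(d log a(0) − d log b(0)) lies in the subgroup 2·DLog of Ω¹_{K/k}. Consequently the 2-torsion connection (m/2)·d log a(0) ∈ Ω¹_{K/k}/DLog attached to a rank-one connection with local equation a·dt/t^m + (lower order terms) at an irregular point does not depend on the choices of local parameter and frame (the well-definedness claim in the formula for the determinant of the Gauss–Manin connection). -/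

import Mathlib

/-- The formal derivative of a Laurent series `f = Σₙ aₙ tⁿ ∈ K((t))`,
namely `f' = Σₙ n aₙ tⁿ⁻¹`. -/
noncomputable def lsDeriv {K : Type*} [Field K] (f : LaurentSeries K) : LaurentSeries K where
  coeff n := (n + 1) • f.coeff (n + 1)
  isPWO_support' := by
    apply Set.IsPWO.mono (f.isPWO_support'.image_of_monotone (f := fun n : ℤ => n - 1)
      (fun x y hxy => by simpa using hxy))
    intro n hn
    have : f.coeff (n + 1) ≠ 0 := by
      intro h
      simp [Function.mem_support, h] at hn
    exact ⟨n + 1, this, by ring⟩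

/-- Composition (substitution) `b ∘ s` of formal power series: for `s` with zero
constant term, the coefficient of `t^k` in `b ∘ s = Σₙ bₙ sⁿ` is
`Σ_{n ≤ k} bₙ · (coefficient of t^k in sⁿ)`. -/
noncomputable def psComp {K : Type*} [Field K] (b s : PowerSeries K) : PowerSeries K :=
  PowerSeries.mk fun k =>
    ∑ n ∈ Finset.range (k + 1), PowerSeries.coeff (R := K) n b * PowerSeries.coeff (R := K) k (s ^ n)

/-- The additive subgroup `DLog ⊆ Ω¹_{K/k}` generated by the logarithmic
differentials `d log c = c⁻¹ · dc` for `c ∈ Kˣ`. -/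
noncomputable def dlogSubgroup (k K : Type*) [Field k] [Field K] [Algebra k K] :
    AddSubgroup (KaehlerDifferential k K) :=
  AddSubgroup.closure {ω | ∃ c : K, c ≠ 0 ∧ ω = c⁻¹ • KaehlerDifferential.D k K c}

section Helpers

variable {K : Type*} [Field K]

lemma lsDeriv_coeff (f : LaurentSeries K) (i : ℤ) :
    (lsDeriv f).coeff i = (i + 1) • f.coeff (i + 1) := rfl

lemma ofPS_coeff_neg (x : PowerSeries K) {i : ℤ} (hi : i < 0) :
    (HahnSeries.ofPowerSeries ℤ K x).coeff i = 0 := by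
  rw [HahnSeries.ofPowerSeries_apply]
  apply HahnSeries.embDomain_notin_range
  rintro ⟨n, rfl⟩
  simp at hi
  omega

lemma hahn_order_eq (x : HahnSeries ℤ K) (g : ℤ) (h1 : x.coeff g ≠ 0)
    (h2 : ∀ i < g, x.coeff i = 0) : x.order = g := by
  have hx : x ≠ 0 := HahnSeries.ne_zero_of_coeff_ne_zero h1
  have hle : x.order ≤ g := HahnSeries.order_le_of_coeff_ne_zero h1
  rcases lt_or_eq_of_le hle with h | h
  · exact absurd (HahnSeries.leadingCoeff_eq (x := x) ▸ h2 _ h)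
      (HahnSeries.leadingCoeff_ne_zero.mpr hx)
  · exact h

lemma hahn_le_orderTop (x : HahnSeries ℤ K) (g : ℤ)
    (h : ∀ i, x.coeff i ≠ 0 → g ≤ i) : (g : WithTop ℤ) ≤ x.orderTop := by
  rcases eq_or_ne x 0 with rfl | hx
  · simp
  · rw [HahnSeries.orderTop_of_ne_zero hx, WithTop.coe_le_coe]
    exact h _ (HahnSeries.coeff_orderTop_ne (HahnSeries.orderTop_of_ne_zero hx))

lemma hahn_leadingCoeff_pow (x : HahnSeries ℤ K) (hx : x ≠ 0) (j : ℕ) :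
    (x ^ j).leadingCoeff = x.leadingCoeff ^ j := by
  induction j with
  | zero => simp [HahnSeries.leadingCoeff_one]
  | succ j ih =>
    rw [pow_succ, HahnSeries.leadingCoeff_eq,
      HahnSeries.order_mul (pow_ne_zero _ hx) hx,
      HahnSeries.coeff_mul_order_add_order, ih, pow_succ]

lemma hahn_leadingCoeff_mul (x y : HahnSeries ℤ K) (hx : x ≠ 0) (hy : y ≠ 0) :
    (x * y).leadingCoeff = x.leadingCoeff * y.leadingCoeff := by
  rw [HahnSeries.leadingCoeff_eq, HahnSeries.order_mul hx hy,
    HahnSeries.coeff_mul_order_add_order]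

end Helpers

section Dlog

variable (k K : Type*) [Field k] [Field K] [Algebra k K]

lemma dlog_mul {x y : K} (hx : x ≠ 0) (hy : y ≠ 0) :
    (x * y)⁻¹ • KaehlerDifferential.D k K (x * y)
      = x⁻¹ • KaehlerDifferential.D k K x + y⁻¹ • KaehlerDifferential.D k K y := by
  rw [Derivation.leibniz, smul_add, smul_smul, smul_smul]
  have e1 : (x * y)⁻¹ * x = y⁻¹ := by field_simp
  have e2 : (x * y)⁻¹ * y = x⁻¹ := by field_simp
  rw [e1, e2, add_comm]

lemma dlog_pow {x : K} (hx : x ≠ 0) (j : ℕ) :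
    (x ^ j)⁻¹ • KaehlerDifferential.D k K (x ^ j)
      = (j : ℤ) • (x⁻¹ • KaehlerDifferential.D k K x) := by
  induction j with
  | zero => simp
  | succ j ih =>
    rw [pow_succ, dlog_mul k K (pow_ne_zero _ hx) hx, ih]
    push_cast
    rw [add_smul, one_smul]

end Dlog

/-- Let `k ⊆ K` be fields of characteristic zero, `m ≥ 2`, and let `a, b ∈ K[[t]]`
have nonzero constant terms.  Let `s ∈ K[[t]]` be a change of local parameter
(`s(0) = 0`, `s'(0) ≠ 0`) and `u ∈ K((t))` a nonzero change of frame.  If the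
rank-one connection forms `a·dt/t^m` and `b·dt'/t'^m` correspond under `t' = s(t)`
and the frame change by `u`, i.e.
`a·t^{−m} = (b∘s)·s^{−m}·s' + u'/u` in `K((t))`, then
`m·(d log a(0) − d log b(0)) ∈ 2·DLog ⊆ Ω¹_{K/k}`; hence the 2-torsion connection
`(m/2)·d log a(0) ∈ Ω¹_{K/k}/DLog` attached to an irregular rank-one connection
is independent of the choice of local parameter and frame. -/
theorem two_torsion_connection_well_defined
    (k K : Type*) [Field k] [Field K] [Algebra k K] [CharZero k] [CharZero K]
    (m : ℕ) (hm : 2 ≤ m)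
    (a b : PowerSeries K)
    (ha : PowerSeries.constantCoeff (R := K) a ≠ 0) (hb : PowerSeries.constantCoeff (R := K) b ≠ 0)
    (s : PowerSeries K)
    (hs0 : PowerSeries.constantCoeff (R := K) s = 0) (hs1 : PowerSeries.coeff (R := K) 1 s ≠ 0)
    (u : LaurentSeries K) (hu : u ≠ 0)
    (heq : (HahnSeries.ofPowerSeries ℤ K a) * HahnSeries.single (-(m : ℤ)) (1 : K)
        = (HahnSeries.ofPowerSeries ℤ K (psComp b s))
            * ((HahnSeries.ofPowerSeries ℤ K s)⁻¹) ^ m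
            * lsDeriv (HahnSeries.ofPowerSeries ℤ K s)
          + lsDeriv u * u⁻¹) :
    ∃ ω ∈ dlogSubgroup k K,
      (m : ℤ) • ((PowerSeries.constantCoeff (R := K) a)⁻¹
            • KaehlerDifferential.D k K (PowerSeries.constantCoeff (R := K) a)
          - (PowerSeries.constantCoeff (R := K) b)⁻¹
            • KaehlerDifferential.D k K (PowerSeries.constantCoeff (R := K) b))
        = (2 : ℤ) • ω := by
  classical
  set a0 := PowerSeries.constantCoeff (R := K) a with ha0def
  set b0 := PowerSeries.constantCoeff (R := K) b with hb0def
  set c := PowerSeries.coeff (R := K) 1 s with hcdef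
  set A := HahnSeries.ofPowerSeries ℤ K a with hAdef
  set B := HahnSeries.ofPowerSeries ℤ K (psComp b s) with hBdef
  set S := HahnSeries.ofPowerSeries ℤ K s with hSdef
  set D := lsDeriv S with hDdef
  -- basic coefficient facts
  have hAcoeff0 : A.coeff (0 : ℤ) = a0 := by
    rw [hAdef, show (0:ℤ) = ((0:ℕ):ℤ) by norm_num, HahnSeries.ofPowerSeries_apply_coeff]
    simp [ha0def]
  have hScoeff1 : S.coeff (1 : ℤ) = c := by
    rw [hSdef, show (1:ℤ) = ((1:ℕ):ℤ) by norm_num, HahnSeries.ofPowerSeries_apply_coeff]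
  have hScoeff0 : S.coeff (0 : ℤ) = 0 := by
    rw [hSdef, show (0:ℤ) = ((0:ℕ):ℤ) by norm_num, HahnSeries.ofPowerSeries_apply_coeff]
    simpa using hs0
  have hBcoeff0 : B.coeff (0 : ℤ) = b0 := by
    rw [hBdef, show (0:ℤ) = ((0:ℕ):ℤ) by norm_num, HahnSeries.ofPowerSeries_apply_coeff]
    simp [psComp, PowerSeries.coeff_mk, hb0def, PowerSeries.coeff_zero_eq_constantCoeff]
  have hS : S ≠ 0 := HahnSeries.ne_zero_of_coeff_ne_zero (hScoeff1 ▸ hs1)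
  have hA : A ≠ 0 := HahnSeries.ne_zero_of_coeff_ne_zero (hAcoeff0 ▸ ha)
  have hB : B ≠ 0 := HahnSeries.ne_zero_of_coeff_ne_zero (hBcoeff0 ▸ hb)
  have hDcoeff0 : D.coeff (0 : ℤ) = c := by
    rw [hDdef, lsDeriv_coeff]
    norm_num [hScoeff1]
  have hD : D ≠ 0 := HahnSeries.ne_zero_of_coeff_ne_zero (hDcoeff0 ▸ hs1)
  -- orders
  have hordA : A.order = 0 := by
    apply hahn_order_eq _ _ (hAcoeff0 ▸ ha)
    intro i hi
    exact ofPS_coeff_neg a hi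
  have hordS : S.order = 1 := by
    apply hahn_order_eq _ _ (hScoeff1 ▸ hs1)
    intro i hi
    rcases lt_or_eq_of_le (show i ≤ 0 by omega) with h | h
    · exact ofPS_coeff_neg s h
    · rw [h]; exact hScoeff0
  have hordB : B.order = 0 := by
    apply hahn_order_eq _ _ (hBcoeff0 ▸ hb)
    intro i hi
    exact ofPS_coeff_neg _ hi
  have hordD : D.order = 0 := by
    apply hahn_order_eq _ _ (hDcoeff0 ▸ hs1)
    intro i hi
    rw [hDdef, lsDeriv_coeff]
    rcases lt_or_eq_of_le (show i + 1 ≤ 0 by omega) with h | h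
    · rw [hSdef, ofPS_coeff_neg s h, smul_zero]
    · rw [h, zero_smul]
  have hordSm : (S ^ m).order = (m : ℤ) := by
    rw [HahnSeries.order_pow, hordS]
    simp
  have hleadA : A.leadingCoeff = a0 := by rw [HahnSeries.leadingCoeff_eq, hordA, hAcoeff0]
  have hleadS : S.leadingCoeff = c := by rw [HahnSeries.leadingCoeff_eq, hordS, hScoeff1]
  have hleadB : B.leadingCoeff = b0 := by rw [HahnSeries.leadingCoeff_eq, hordB, hBcoeff0]
  have hleadD : D.leadingCoeff = c := by rw [HahnSeries.leadingCoeff_eq, hordD, hDcoeff0]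
  have hleadSm : (S ^ m).leadingCoeff = c ^ m := by
    rw [hahn_leadingCoeff_pow _ hS, hleadS]
  have hSm : S ^ m ≠ 0 := pow_ne_zero _ hS
  have hulead : u.leadingCoeff ≠ 0 := HahnSeries.leadingCoeff_ne_zero.mpr hu
  -- clear denominators in heq
  have h2 : A * HahnSeries.single (-(m : ℤ)) (1 : K) * (S ^ m * u)
      = B * D * u + lsDeriv u * S ^ m := by
    rw [heq, add_mul]
    congr 1
    · have hinv : (S⁻¹) ^ m * S ^ m = 1 := by
        rw [← mul_pow, inv_mul_cancel₀ hS, one_pow]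
      calc B * (S⁻¹) ^ m * D * (S ^ m * u) = B * D * u * ((S⁻¹) ^ m * S ^ m) := by ring
        _ = B * D * u := by rw [hinv, mul_one]
    · calc lsDeriv u * u⁻¹ * (S ^ m * u) = lsDeriv u * S ^ m * (u⁻¹ * u) := by ring
        _ = lsDeriv u * S ^ m := by rw [inv_mul_cancel₀ hu, mul_one]
  -- coefficient at u.order
  have h3 := congrArg (fun z : LaurentSeries K => z.coeff u.order) h2
  have hordSmu : (S ^ m * u).order = (m : ℤ) + u.order := by
    rw [HahnSeries.order_mul hSm hu, hordSm]
  have lhs_eq : (A * HahnSeries.single (-(m : ℤ)) (1 : K) * (S ^ m * u)).coeff u.order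
      = a0 * (c ^ m * u.leadingCoeff) := by
    have hre : A * HahnSeries.single (-(m : ℤ)) (1 : K) * (S ^ m * u)
        = A * (S ^ m * u) * HahnSeries.single (-(m : ℤ)) (1 : K) := by ring
    rw [hre]
    have h4 : (A * (S ^ m * u) * HahnSeries.single (-(m : ℤ)) (1 : K)).coeff
        ((u.order + (m : ℤ)) + (-(m : ℤ))) = (A * (S ^ m * u)).coeff (u.order + (m : ℤ)) * 1 :=
      HahnSeries.coeff_mul_single_add
    rw [show (u.order : ℤ) = (u.order + (m : ℤ)) + (-(m : ℤ)) by ring, h4, mul_one]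
    rw [show u.order + (m : ℤ) = A.order + (S ^ m * u).order by
      rw [hordA, hordSmu]; ring]
    rw [HahnSeries.coeff_mul_order_add_order, hleadA]
    congr 1
    rw [hahn_leadingCoeff_mul _ _ hSm hu, hleadSm]
  have t1 : (B * D * u).coeff u.order = b0 * c * u.leadingCoeff := by
    have hBD : B * D ≠ 0 := mul_ne_zero hB hD
    rw [show (u.order : ℤ) = (B * D).order + u.order by
      rw [HahnSeries.order_mul hB hD, hordB, hordD]; ring]
    rw [HahnSeries.coeff_mul_order_add_order, hahn_leadingCoeff_mul _ _ hB hD, hleadB, hleadD]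
  have t2 : (lsDeriv u * S ^ m).coeff u.order = 0 := by
    apply HahnSeries.coeff_eq_zero_of_lt_orderTop
    have hdu : ((u.order - 1 : ℤ) : WithTop ℤ) ≤ (lsDeriv u).orderTop := by
      apply hahn_le_orderTop
      intro i hi
      have hcu : u.coeff (i + 1) ≠ 0 := by
        intro h
        rw [lsDeriv_coeff, h, smul_zero] at hi
        exact hi rfl
      have := HahnSeries.order_le_of_coeff_ne_zero hcu
      omega
    have hsm : ((m : ℤ) : WithTop ℤ) ≤ (S ^ m).orderTop := by
      rw [← HahnSeries.order_eq_orderTop_of_ne_zero hSm, WithTop.coe_le_coe, hordSm]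
    calc (u.order : WithTop ℤ) < ((u.order - 1 : ℤ) : WithTop ℤ) + ((m : ℤ) : WithTop ℤ) := by
          rw [← WithTop.coe_add, WithTop.coe_lt_coe]; omega
      _ ≤ (lsDeriv u).orderTop + (S ^ m).orderTop := add_le_add hdu hsm
      _ ≤ (lsDeriv u * S ^ m).orderTop := HahnSeries.orderTop_add_le_mul
  rw [lhs_eq, HahnSeries.coeff_add, t1, t2, add_zero] at h3
  -- deduce a0 * c^(m-1) = b0
  have hc : c ≠ 0 := hs1
  have key : a0 * c ^ (m - 1) = b0 := by
    have h5 : a0 * c ^ m = b0 * c :=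
      mul_right_cancel₀ hulead (by rw [mul_assoc]; exact h3)
    have h6 : a0 * c ^ (m - 1) * c = b0 * c := by
      rw [mul_assoc, ← pow_succ]
      have : m - 1 + 1 = m := by omega
      rw [this]
      exact h5
    exact mul_right_cancel₀ hc h6
  -- Kähler differential computation
  set L := c⁻¹ • KaehlerDifferential.D k K c with hLdef
  have hDlogb : b0⁻¹ • KaehlerDifferential.D k K b0
      = a0⁻¹ • KaehlerDifferential.D k K a0 + ((m - 1 : ℕ) : ℤ) • L := by
    rw [← key, dlog_mul k K ha (pow_ne_zero _ hc), dlog_pow k K hc]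
  obtain ⟨q, hq⟩ : Even (((m : ℤ) - 1) * m) := by
    simpa using Int.even_mul_succ_self ((m : ℤ) - 1)
  have hLmem : L ∈ dlogSubgroup k K :=
    AddSubgroup.subset_closure
      (k := {ω | ∃ c : K, c ≠ 0 ∧ ω = c⁻¹ • KaehlerDifferential.D k K c})
      (show L ∈ {ω | ∃ c : K, c ≠ 0 ∧ ω = c⁻¹ • KaehlerDifferential.D k K c}
        from ⟨c, hc, hLdef⟩)
  refine ⟨(-q) • L, AddSubgroup.zsmul_mem _ hLmem _, ?_⟩
  rw [hDlogb]
  rw [show a0⁻¹ • KaehlerDifferential.D k K a0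
      - (a0⁻¹ • KaehlerDifferential.D k K a0 + ((m - 1 : ℕ) : ℤ) • L)
      = (-((m - 1 : ℕ) : ℤ)) • L by rw [neg_smul]; abel]
  rw [smul_smul, smul_smul]
  congr 1
  have hcast : ((m - 1 : ℕ) : ℤ) = (m : ℤ) - 1 := by
    have := hm; push_cast [Nat.cast_sub (by omega : 1 ≤ m)]; ring
  rw [hcast]
  linear_combination -hq
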